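/- Let A and B be nontrivial finite groups which are not both of order 2. Then the free product A ∗ B contains a finite-index subgroup which is isomorphic to a free group of rank n for some n ≥ 2 (in particular, A ∗ B is virtually a nonabelian free group). -/

import Mathlib

open Monoid Subgroup Pointwise
open scoped commutatorElement Function

namespace FPVFAux

open Monoid.CoprodI Monoid.CoprodI.Word

section Words

variable {ι : Type*} {G : ι → Type*} [∀ i, Group (G i)] [DecidableEq ι]
  [∀ i, DecidableEq (G i)]

lemma smul_toList (i : ι) (m : G i) (hm : m ≠ 1) (w : Word G) (hw : w.fstIdx ≠ some i) :
    (of m • w).toList = ⟨i, m⟩ :: w.toList := by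
  rw [← cons_eq_smul (h1 := hw) (h2 := hm)]
  rfl

lemma fstIdx_invSmul (i : ι) (x : G i) (hx : x ≠ 1) (w : Word G)
    (h : ∀ t, w.toList ≠ ⟨i, x⟩ :: t) : ((of x⁻¹) • w).fstIdx = some i := by
  induction w using consRecOn with
  | empty =>
      rw [Word.fstIdx, smul_toList i x⁻¹ (inv_ne_one.2 hx) empty (by simp [Word.fstIdx, empty])]
      rfl
  | cons j m w' h1 h2 _ =>
      rcases eq_or_ne j i with rfl | hji
      · have hmx : m ≠ x := by
          intro hmx
          subst hmx
          exact h w'.toList (by simp [cons])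
        rw [cons_eq_smul, smul_smul, ← map_mul]
        rw [Word.fstIdx, smul_toList j (x⁻¹ * m)
          (by rwa [Ne, inv_mul_eq_one, eq_comm]) w' h1]
        rfl
      · rw [Word.fstIdx, smul_toList i x⁻¹ (inv_ne_one.2 hx) _
          (by rw [fstIdx_cons]; exact fun hc => hji (Option.some.inj hc))]
        rfl

lemma notPrefix_invSmul (i j : ι) (hij : i ≠ j) (x : G i) (y : G j) (hy : y ≠ 1)
    (w : Word G) (hw : ∀ t, w.toList ≠ ⟨j, y⟩ :: ⟨i, x⟩ :: t) :
    ∀ t, ((of y⁻¹) • w).toList ≠ ⟨i, x⟩ :: t := by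
  induction w using consRecOn with
  | empty =>
      intro t ht
      rw [smul_toList j y⁻¹ (inv_ne_one.2 hy) empty (by simp [Word.fstIdx, empty])] at ht
      simp only [List.cons.injEq, Sigma.mk.inj_iff] at ht
      exact hij ht.1.1.symm
  | cons k m w' h1 h2 _ =>
      rcases eq_or_ne k j with rfl | hkj
      · rcases eq_or_ne m y with rfl | hmy
        · intro t ht
          rw [cons_eq_smul, smul_smul, ← map_mul, inv_mul_cancel, map_one, one_smul] at ht
          exact hw t (by simp [cons, ht])
        · intro t ht
          rw [cons_eq_smul, smul_smul, ← map_mul,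
            smul_toList k (y⁻¹ * m) (by rwa [Ne, inv_mul_eq_one, eq_comm]) w' h1] at ht
          simp only [List.cons.injEq, Sigma.mk.inj_iff] at ht
          exact hij ht.1.1.symm
      · intro t ht
        rw [smul_toList j y⁻¹ (inv_ne_one.2 hy) _
          (by rw [fstIdx_cons]; exact fun hc => hkj (Option.some.inj hc))] at ht
        simp only [List.cons.injEq, Sigma.mk.inj_iff] at ht
        exact hij ht.1.1.symm

lemma commutator_smul (i j : ι) (hij : i ≠ j) (x : G i) (y : G j) (hx : x ≠ 1) (hy : y ≠ 1)
    (w : Word G) (hw : ∀ t, w.toList ≠ ⟨j, y⟩ :: ⟨i, x⟩ :: t) :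
    ∃ t, ((of x * of y * (of x)⁻¹ * (of y)⁻¹) • w).toList = ⟨i, x⟩ :: ⟨j, y⟩ :: t := by
  have e1 : ((of x * of y * (of x)⁻¹ * (of y)⁻¹) • w)
      = of x • (of y • ((of x⁻¹) • ((of y⁻¹) • w))) := by
    rw [← map_inv, ← map_inv, mul_smul, mul_smul, mul_smul]
  have h1 : ∀ t, ((of y⁻¹) • w).toList ≠ ⟨i, x⟩ :: t :=
    notPrefix_invSmul i j hij x y hy w hw
  have h2 : ((of x⁻¹) • ((of y⁻¹) • w)).fstIdx = some i :=
    fstIdx_invSmul i x hx _ h1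
  have h3 : (of y • ((of x⁻¹) • ((of y⁻¹) • w))).toList
      = ⟨j, y⟩ :: ((of x⁻¹) • ((of y⁻¹) • w)).toList := by
    refine smul_toList j y hy _ ?_
    rw [h2]
    exact fun hc => hij (Option.some.inj hc)
  have h4 : (of x • (of y • ((of x⁻¹) • ((of y⁻¹) • w)))).toList
      = ⟨i, x⟩ :: (of y • ((of x⁻¹) • ((of y⁻¹) • w))).toList := by
    refine smul_toList i x hx _ ?_
    rw [Word.fstIdx, h3]
    exact fun hc => hij (Option.some.inj hc).symm
  exact ⟨_, by rw [e1, h4, h3]⟩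

end Words

section Main

variable {H : Bool → Type*} [∀ i, Group (H i)]

/-- The natural map to the direct product. -/
noncomputable def toProd : CoprodI H →* (H true) × (H false) :=
  CoprodI.lift (fun i => Bool.rec (motive := fun i => H i →* (H true) × (H false))
    (MonoidHom.inr _ _) (MonoidHom.inl _ _) i)

@[simp] lemma toProd_of_true (a : H true) : toProd (of a) = (a, 1) := by
  show CoprodI.lift _ (of a) = _
  rw [CoprodI.lift_of]
  rfl

@[simp] lemma toProd_of_false (b : H false) : toProd (of b) = (1, b) := by
  show CoprodI.lift _ (of b) = _
  rw [CoprodI.lift_of]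
  rfl

theorem main [Finite (H true)] [Finite (H false)] [Nontrivial (H true)]
    [Nontrivial (H false)]
    (hcard : ¬(Nat.card (H true) = 2 ∧ Nat.card (H false) = 2)) :
    ∃ K : Subgroup (CoprodI H), K.FiniteIndex ∧
      ∃ n : ℕ, 2 ≤ n ∧ Nonempty (K ≃* FreeGroup (Fin n)) := by
  classical
  letI : DecidableEq Bool := instDecidableEqBool
  letI : ∀ i, DecidableEq (H i) := fun i => Classical.decEq _
  have hφsurj : Function.Surjective (toProd (H := H)) := by
    intro p
    refine ⟨of p.1 * of p.2, ?_⟩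
    rw [map_mul, toProd_of_true, toProd_of_false]
    exact Prod.ext (by simp) (by simp)
  -- the kernel has finite index
  have hKfi : (toProd (H := H)).ker.FiniteIndex := by
    constructor
    rw [Subgroup.index_eq_card,
      Nat.card_congr (QuotientGroup.quotientKerEquivOfSurjective _ hφsurj).toEquiv]
    exact Nat.card_pos.ne'
  -- the index type
  set ι' := ({x : H true // x ≠ 1} × {y : H false // y ≠ 1}) with hι'def
  have hsub : ∀ (α : Type _) [Group α] [Finite α],
      Nat.card {x : α // x ≠ 1} = Nat.card α - 1 := by
    intro α _ _
    letI := Fintype.ofFinite α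
    rw [Nat.card_eq_fintype_card, Nat.card_eq_fintype_card]
    have hc := Fintype.card_subtype_compl (fun x : α => x = 1)
    rw [Fintype.card_subtype_eq] at hc
    convert hc using 2
  have hcard_ge : ∀ (α : Type _) [Group α] [Finite α] [Nontrivial α], 2 ≤ Nat.card α := by
    intro α _ _ _
    letI := Fintype.ofFinite α
    rw [Nat.card_eq_fintype_card]
    exact Fintype.one_lt_card_iff_nontrivial.2 ‹_›
  have hA : 2 ≤ Nat.card (H true) := hcard_ge _
  have hB : 2 ≤ Nat.card (H false) := hcard_ge _
  have hcard2 : 2 ≤ Nat.card ι' := by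
    rw [hι'def, Nat.card_prod, hsub, hsub]
    rcases Nat.lt_or_ge (Nat.card (H true)) 3 with h3 | h3
    · have hA2 : Nat.card (H true) = 2 := by omega
      have hB3 : 3 ≤ Nat.card (H false) := by
        rcases Nat.lt_or_ge (Nat.card (H false)) 3 with h4 | h4
        · exact absurd ⟨hA2, by omega⟩ hcard
        · exact h4
      rw [hA2]
      omega
    · calc (2 : ℕ) = 2 * 1 := rfl
        _ ≤ (Nat.card (H true) - 1) * (Nat.card (H false) - 1) :=
            Nat.mul_le_mul (by omega) (by omega)
  haveI : Nontrivial ι' := by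
    letI := Fintype.ofFinite ι'
    have hcι : Nat.card ι' = Fintype.card ι' := Nat.card_eq_fintype_card
    refine Fintype.one_lt_card_iff_nontrivial.1 (by omega)
  -- the candidate free generators
  set a : ι' → CoprodI H := fun p => ⁅of (p.1 : H true), of (p.2 : H false)⁆ with hadef
  set F : FreeGroup ι' →* CoprodI H := FreeGroup.lift a with hFdef
  -- ping-pong sets
  set X : ι' → Set (Word H) :=
    fun p => {w | ∃ t, w.toList = ⟨true, (p.1 : H true)⟩ :: ⟨false, (p.2 : H false)⟩ :: t}
    with hXdef
  set Y : ι' → Set (Word H) :=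
    fun p => {w | ∃ t, w.toList = ⟨false, (p.2 : H false)⟩ :: ⟨true, (p.1 : H true)⟩ :: t}
    with hYdef
  have hXnonempty : ∀ p, (X p).Nonempty := by
    rintro ⟨x, y⟩
    refine ⟨⟨[⟨true, (x : H true)⟩, ⟨false, (y : H false)⟩], ?_, ?_⟩, [], rfl⟩
    · rintro l hl
      simp only [List.mem_cons, List.mem_singleton, List.not_mem_nil, or_false] at hl
      rcases hl with rfl | rfl
      · exact x.2
      · exact y.2
    · simp [List.isChain_cons]
  have hXdisj : Pairwise (Disjoint on X) := by
    intro p q hpq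
    rw [Function.onFun, Set.disjoint_left]
    rintro w ⟨t, ht⟩ ⟨t', ht'⟩
    rw [ht] at ht'
    obtain ⟨h1, h2, -⟩ : ((p.1 : H true) = (q.1 : H true)) ∧
        ((p.2 : H false) = (q.2 : H false)) ∧ t = t' := by simpa using ht'
    exact hpq (Prod.ext (Subtype.ext h1) (Subtype.ext h2))
  have hYdisj : Pairwise (Disjoint on Y) := by
    intro p q hpq
    rw [Function.onFun, Set.disjoint_left]
    rintro w ⟨t, ht⟩ ⟨t', ht'⟩
    rw [ht] at ht'
    obtain ⟨h1, h2, -⟩ : ((p.2 : H false) = (q.2 : H false)) ∧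
        ((p.1 : H true) = (q.1 : H true)) ∧ t = t' := by simpa using ht'
    exact hpq (Prod.ext (Subtype.ext h2) (Subtype.ext h1))
  have hXYdisj : ∀ p q, Disjoint (X p) (Y q) := by
    intro p q
    rw [Set.disjoint_left]
    rintro w ⟨t, ht⟩ ⟨t', ht'⟩
    rw [ht] at ht'
    simp at ht'
  have hX : ∀ p, a p • (Y p)ᶜ ⊆ X p := by
    rintro p x ⟨w, hw, rfl⟩
    simp only [Set.mem_compl_iff, hYdef, Set.mem_setOf_eq, not_exists] at hw
    have hc := commutator_smul true false (by simp) (p.1 : H true) (p.2 : H false)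
      p.1.2 p.2.2 w hw
    simpa only [hXdef, Set.mem_setOf_eq, hadef, commutatorElement_def] using hc
  have hY : ∀ p, a⁻¹ p • (X p)ᶜ ⊆ Y p := by
    rintro p x ⟨w, hw, rfl⟩
    simp only [Set.mem_compl_iff, hXdef, Set.mem_setOf_eq, not_exists] at hw
    have hc := commutator_smul false true (by simp) (p.2 : H false) (p.1 : H true)
      p.2.2 p.1.2 w hw
    have ha : (a p)⁻¹ = of (p.2 : H false) * of (p.1 : H true) *
        (of (p.2 : H false))⁻¹ * (of (p.1 : H true))⁻¹ := by
      rw [hadef]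
      simp only [commutatorElement_def]
      group
    simpa only [hYdef, Set.mem_setOf_eq, Pi.inv_apply, ha] using hc
  have hinj : Function.Injective F :=
    FreeGroup.injective_lift_of_ping_pong a X Y hXnonempty hXdisj hYdisj hXYdisj hX hY
  -- the set of all commutators
  set S : Set (CoprodI H) :=
    Set.range (fun q : H true × H false => ⁅of q.1, of q.2⁆) with hSdef
  -- range of F equals closure of S
  have hFrange : F.range = Subgroup.closure S := by
    rw [hFdef, FreeGroup.range_lift_eq_closure]
    apply le_antisymm
    · apply Subgroup.closure_mono
      rintro _ ⟨p, rfl⟩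
      exact ⟨((p.1 : H true), (p.2 : H false)), rfl⟩
    · rw [Subgroup.closure_le]
      rintro s hs
      simp only [SetLike.mem_coe]
      obtain ⟨⟨x, y⟩, rfl⟩ := hs
      show (⁅of x, of y⁆ : CoprodI H) ∈ Subgroup.closure (Set.range a)
      rcases eq_or_ne x 1 with rfl | hx
      · have h1 : (⁅of (1 : H true), of y⁆ : CoprodI H) = 1 := by
          simp [commutatorElement_def]
        rw [h1]; exact Subgroup.one_mem _
      · rcases eq_or_ne y 1 with rfl | hy
        · have h1 : (⁅of x, of (1 : H false)⁆ : CoprodI H) = 1 := by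
            simp [commutatorElement_def]
          rw [h1]; exact Subgroup.one_mem _
        · exact Subgroup.subset_closure ⟨(⟨x, hx⟩, ⟨y, hy⟩), rfl⟩
  -- the closure of S is normal
  have hconj : ∀ g : CoprodI H, ∀ n ∈ Subgroup.closure S, g * n * g⁻¹ ∈ Subgroup.closure S := by
    intro g
    induction g using CoprodI.induction_on with
    | one => intro n hn; simpa using hn
    | mul g₁ g₂ ih₁ ih₂ =>
        intro n hn
        have hg := ih₁ _ (ih₂ n hn)
        convert hg using 1
        group
    | of i m =>
        intro n hn
        refine Subgroup.closure_induction (p := fun n _ => of m * n * (of m)⁻¹ ∈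
          Subgroup.closure S) ?_ ?_ ?_ ?_ hn
        · rintro _ ⟨⟨x, y⟩, rfl⟩
          cases i with
          | true =>
              have hkey : of m * ⁅of x, of y⁆ * (of m)⁻¹
                  = ⁅of (m * x), of y⁆ * ⁅of m, of y⁆⁻¹ := by
                simp only [commutatorElement_def, map_mul]
                group
              rw [hkey]
              exact Subgroup.mul_mem _ (Subgroup.subset_closure ⟨(m * x, y), rfl⟩)
                (Subgroup.inv_mem _ (Subgroup.subset_closure ⟨(m, y), rfl⟩))
          | false =>
              have hkey : of m * ⁅of x, of y⁆ * (of m)⁻¹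
                  = ⁅of x, of m⁆⁻¹ * ⁅of x, of (m * y)⁆ := by
                simp only [commutatorElement_def, map_mul]
                group
              rw [hkey]
              exact Subgroup.mul_mem _
                (Subgroup.inv_mem _ (Subgroup.subset_closure ⟨(x, m), rfl⟩))
                (Subgroup.subset_closure ⟨(x, m * y), rfl⟩)
        · simpa using Subgroup.one_mem (Subgroup.closure S)
        · intro u v hu hv pu pv
          have := Subgroup.mul_mem _ pu pv
          convert this using 1
          group
        · intro u hu pu
          have := Subgroup.inv_mem _ pu
          convert this using 1
          group
  haveI hN : (Subgroup.closure S).Normal := ⟨fun n hn g => hconj g n hn⟩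
  -- the kernel is contained in the closure of S
  have hle2 : (toProd (H := H)).ker ≤ Subgroup.closure S := by
    intro g hg
    let π : CoprodI H →* CoprodI H ⧸ Subgroup.closure S := QuotientGroup.mk' _
    have hcomm : ∀ (m : H true) (n : H false), Commute (π (of m)) (π (of n)) := by
      intro m n
      have h1 : π ⁅of m, of n⁆ = 1 :=
        (QuotientGroup.eq_one_iff _).2 (Subgroup.subset_closure ⟨(m, n), rfl⟩)
      rw [map_commutatorElement] at h1
      exact commutatorElement_eq_one_iff_commute.1 h1
    let ψ : (H true × H false) →* CoprodI H ⧸ Subgroup.closure S :=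
      MonoidHom.noncommCoprod (π.comp of) (π.comp of) hcomm
    have hψφ : ψ.comp (toProd (H := H)) = π := by
      apply CoprodI.ext_hom
      intro i
      cases i with
      | true =>
          ext x
          show ψ (toProd (of x)) = π (of x)
          rw [toProd_of_true]
          show π (of x) * π (of (1 : H false)) = π (of x)
          rw [map_one, map_one, mul_one]
      | false =>
          ext x
          show ψ (toProd (of x)) = π (of x)
          rw [toProd_of_false]
          show π (of (1 : H true)) * π (of x) = π (of x)
          rw [map_one, map_one, one_mul]
    have hπg : π g = 1 := by
      have h := DFunLike.congr_fun hψφ g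
      simp only [MonoidHom.comp_apply] at h
      rw [← h, MonoidHom.mem_ker.1 hg, map_one]
    exact (QuotientGroup.eq_one_iff g).1 hπg
  -- F's range is contained in the kernel
  have hle1 : F.range ≤ (toProd (H := H)).ker := by
    rw [hFrange, Subgroup.closure_le]
    rintro s hs
    simp only [SetLike.mem_coe]
    obtain ⟨⟨x, y⟩, rfl⟩ := hs
    rw [MonoidHom.mem_ker, map_commutatorElement, toProd_of_true, toProd_of_false]
    refine commutatorElement_eq_one_iff_commute.2 ?_
    show ((x, 1) : H true × H false) * (1, y) = (1, y) * (x, 1)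
    simp [Prod.ext_iff]
  have hker : F.range = (toProd (H := H)).ker :=
    le_antisymm hle1 (by rw [hFrange] at *; exact hle2)
  -- assemble
  obtain ⟨nn, ⟨e0⟩⟩ := Finite.exists_equiv_fin ι'
  have hnn : Nat.card ι' = nn := Nat.card_eq_of_equiv_fin e0
  refine ⟨(toProd (H := H)).ker, hKfi, nn, by omega, ⟨?_⟩⟩
  have e1 : FreeGroup ι' ≃* F.range := MonoidHom.ofInjective hinj
  have e2 : F.range ≃* (toProd (H := H)).ker := MulEquiv.subgroupCongr hker
  have e3 : FreeGroup (Fin nn) ≃* FreeGroup ι' := FreeGroup.freeGroupCongr e0.symm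
  exact (e2.symm.trans e1.symm).trans ((FreeGroup.freeGroupCongr e0))

end Main

section Transfer

universe u v

/-- The two-element family of groups. -/
def Fam (A : Type u) (B : Type v) : Bool → Type (max u v) :=
  fun b => Bool.rec (ULift.{u} B) (ULift.{v} A) b

instance famGroup {A : Type u} {B : Type v} [Group A] [Group B] :
    ∀ b, Group (Fam A B b) := fun b =>
  Bool.rec (inferInstanceAs (Group (ULift B))) (inferInstanceAs (Group (ULift A))) b

instance famFinite {A : Type u} {B : Type v} [Finite A] [Finite B] :
    ∀ b, Finite (Fam A B b) := fun b =>
  Bool.rec (inferInstanceAs (Finite (ULift B))) (inferInstanceAs (Finite (ULift A))) b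

instance famNontrivialT {A : Type u} {B : Type v} [Nontrivial A] :
    Nontrivial (Fam A B true) := inferInstanceAs (Nontrivial (ULift A))

instance famNontrivialF {A : Type u} {B : Type v} [Nontrivial B] :
    Nontrivial (Fam A B false) := inferInstanceAs (Nontrivial (ULift B))

lemma card_fam_true (A : Type u) (B : Type v) : Nat.card (Fam A B true) = Nat.card A :=
  Nat.card_congr (Equiv.ulift)

lemma card_fam_false (A : Type u) (B : Type v) : Nat.card (Fam A B false) = Nat.card B :=
  Nat.card_congr (Equiv.ulift)

/-- The coproduct of two groups is the free product of the two-element family. -/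
noncomputable def coprodEquiv (A : Type u) (B : Type v) [Group A] [Group B] :
    Monoid.Coprod A B ≃* CoprodI (Fam A B) :=
  MonoidHom.toMulEquiv
    (Coprod.lift
      ((of (i := true)).comp (MulEquiv.ulift.symm.toMonoidHom : A →* Fam A B true))
      ((of (i := false)).comp (MulEquiv.ulift.symm.toMonoidHom : B →* Fam A B false)))
    (CoprodI.lift (fun i => Bool.rec
      (motive := fun i => Fam A B i →* Monoid.Coprod A B)
      (Coprod.inr.comp (MulEquiv.ulift.toMonoidHom : Fam A B false →* B))
      (Coprod.inl.comp (MulEquiv.ulift.toMonoidHom : Fam A B true →* A)) i))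
    (by
      apply Coprod.hom_ext <;> ext x <;>
        simp [Coprod.lift_apply_inl, Coprod.lift_apply_inr, CoprodI.lift_of]
      all_goals rfl)
    (by
      apply CoprodI.ext_hom
      intro i
      cases i <;> ext x <;>
        simp [Coprod.lift_apply_inl, Coprod.lift_apply_inr, CoprodI.lift_of]
      all_goals rfl)

end Transfer

end FPVFAux

/-- The free product of two nontrivial finite groups, not both of order 2, is virtually a
nonabelian free group of finite rank. -/
theorem freeProduct_virtually_free {A B : Type*} [Group A] [Group B]
    [Finite A] [Finite B] [Nontrivial A] [Nontrivial B]
    (h : ¬(Nat.card A = 2 ∧ Nat.card B = 2)) :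
    ∃ H : Subgroup (Monoid.Coprod A B), H.FiniteIndex ∧
      ∃ n : ℕ, 2 ≤ n ∧ Nonempty (H ≃* FreeGroup (Fin n)) := by
  classical
  obtain ⟨K', hfi, n, hn, ⟨iso⟩⟩ := FPVFAux.main (H := FPVFAux.Fam A B) (by
    rw [FPVFAux.card_fam_true, FPVFAux.card_fam_false]; exact h)
  let e : Monoid.Coprod A B ≃* Monoid.CoprodI (FPVFAux.Fam A B) := FPVFAux.coprodEquiv A B
  refine ⟨K'.comap e.toMonoidHom, ?_, n, hn, ⟨?_⟩⟩
  · constructor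
    rw [K'.index_comap_of_surjective
      (show Function.Surjective ⇑e.toMonoidHom from e.surjective)]
    exact hfi.index_ne_zero
  · have heq : K'.comap e.toMonoidHom = K'.map e.symm.toMonoidHom :=
      Subgroup.comap_equiv_eq_map_symm' e K'
    exact ((MulEquiv.subgroupCongr heq).trans ((e.symm.subgroupMap K').symm)).trans iso
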